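/- arXiv:1509.05699 — 2 statements merged into one kernel-verified Lean document; each statement's English description precedes it below -/
import Mathlib

section
/- Suppose X is doubling, let p ∈ (0,∞], and let K ⊆ X⁺ be a subset contained in a cylinder B(c_K,r_K) × (κ₀,κ₁). Then there are constants, depending only on X, K, and p, such that for every measurable f on X⁺: ‖1_K f‖_{T^{p,∞}} ≲_{K,p} ‖f‖_{L^∞(K)} ≲_{K,p} ‖f‖_{T^{p,∞}}. -/
open MeasureTheory Metric Set Filter ENNReal
open scoped NNReal Topology

noncomputable section

namespace WTS

variable {X : Type*} [MetricSpace X] [MeasurableSpace X]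

/-- The measure `dt/t` on `(0,∞) ⊆ ℝ`. -/
def tMeasure : Measure ℝ :=
  (volume.restrict (Ioi (0:ℝ))).withDensity fun t => ENNReal.ofReal t⁻¹

/-- The measure `dμ(y) dt/t` on the generalised half-space `X⁺ = X × (0,∞)`. -/
def muPlus (μ : Measure X) : Measure (X × ℝ) := μ.prod tMeasure

/-- The cone with vertex `x`. -/
def cone (x : X) : Set (X × ℝ) := {p | dist x p.1 < p.2}

/-- The tent over the ball `B(z,r)`. -/
def tent (z : X) (r : ℝ) : Set (X × ℝ) := {p | 0 < p.2 ∧ ball p.1 p.2 ⊆ ball z r}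

/-- Ball volume `V(x,t)`. -/
def vol (μ : Measure X) (x : X) (t : ℝ) : ℝ≥0∞ := μ (ball x t)

/-- The multiplication operator `V^s`. -/
def Vpow (μ : Measure X) (s : ℝ) (f : X × ℝ → ℂ) : X × ℝ → ℂ := fun p =>
  (((vol μ p.1 p.2).toReal ^ s : ℝ) : ℂ) * f p

/-- `𝒜^q f (x)`, `q` finite. -/
def Aq (μ : Measure X) (q : ℝ) (f : X × ℝ → ℂ) (x : X) : ℝ≥0∞ :=
  (∫⁻ p in cone x, (‖f p‖₊ : ℝ≥0∞) ^ q / vol μ p.1 p.2 ∂muPlus μ) ^ (1/q)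

/-- `𝒜^∞ f (x)`. -/
def Ainf (μ : Measure X) (f : X × ℝ → ℂ) (x : X) : ℝ≥0∞ :=
  essSup (fun p => (‖f p‖₊ : ℝ≥0∞)) ((muPlus μ).restrict (cone x))

/-- `𝒜^q f (x)` for `q ∈ (0,∞]`. -/
def AqE (μ : Measure X) (q : ℝ≥0∞) (f : X × ℝ → ℂ) (x : X) : ℝ≥0∞ :=
  if q = ∞ then Ainf μ f x else Aq μ q.toReal f x

/-- `𝒞^q_α f (x)`, `q` finite. -/
def Cq (μ : Measure X) (q α : ℝ) (f : X × ℝ → ℂ) (x : X) : ℝ≥0∞ :=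
  ⨆ (z : X) (r : ℝ) (_ : 0 < r ∧ x ∈ ball z r),
    μ (ball z r) ^ (-α) *
      ((μ (ball z r))⁻¹ * ∫⁻ p in tent z r, (‖f p‖₊ : ℝ≥0∞) ^ q ∂muPlus μ) ^ (1/q)

/-- `𝒞^∞_α f (x)`. -/
def Cinf (μ : Measure X) (α : ℝ) (f : X × ℝ → ℂ) (x : X) : ℝ≥0∞ :=
  ⨆ (z : X) (r : ℝ) (_ : 0 < r ∧ x ∈ ball z r),
    μ (ball z r) ^ (-(1+α)) *
      essSup (fun p => (‖f p‖₊ : ℝ≥0∞)) ((muPlus μ).restrict (tent z r))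

/-- `𝒞^q_α f (x)` for `q ∈ (0,∞]`. -/
def CqE (μ : Measure X) (q : ℝ≥0∞) (α : ℝ) (f : X × ℝ → ℂ) (x : X) : ℝ≥0∞ :=
  if q = ∞ then Cinf μ α f x else Cq μ q.toReal α f x

/-- The (unweighted) tent space quasinorm `‖f‖_{T^{p,q}}`, `p, q` finite. -/
def tentNorm (μ : Measure X) (p q : ℝ) (f : X × ℝ → ℂ) : ℝ≥0∞ :=
  (∫⁻ x, Aq μ q f x ^ p ∂μ) ^ (1/p)

/-- The weighted tent space quasinorm `‖f‖_{T^{p,q}_s}`, `p, q` finite. -/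
def tentNormS (μ : Measure X) (p q s : ℝ) (f : X × ℝ → ℂ) : ℝ≥0∞ :=
  tentNorm μ p q (Vpow μ (-s) f)

/-- The quasinorm `‖f‖_{T^{p,∞}}`, `p` finite. -/
def tentNormQInf (μ : Measure X) (p : ℝ) (f : X × ℝ → ℂ) : ℝ≥0∞ :=
  (∫⁻ x, Ainf μ f x ^ p ∂μ) ^ (1/p)

/-- The norm `‖f‖_{T^{∞,q}_{s;α}}`, `q` finite. -/
def tentNormPInf (μ : Measure X) (q s α : ℝ) (f : X × ℝ → ℂ) : ℝ≥0∞ :=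
  essSup (Cq μ q α (Vpow μ (-s) f)) μ

/-- The norm `‖f‖_{T^{∞,∞}_{s;α}} = sup_B μ(B)^{-α} ‖V^{-s} f‖_{L^∞(T(B))}`. -/
def tentNormInfInf (μ : Measure X) (s α : ℝ) (f : X × ℝ → ℂ) : ℝ≥0∞ :=
  ⨆ (z : X) (r : ℝ) (_ : 0 < r),
    μ (ball z r) ^ (-α) *
      essSup (fun p => (‖Vpow μ (-s) f p‖₊ : ℝ≥0∞)) ((muPlus μ).restrict (tent z r))

/-- `‖V^{-s} f‖_{L^∞(X⁺)}`. -/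
def linfNormPlus (μ : Measure X) (s : ℝ) (f : X × ℝ → ℂ) : ℝ≥0∞ :=
  essSup (fun p => (‖Vpow μ (-s) f p‖₊ : ℝ≥0∞)) (muPlus μ)

/-- The quasinorm of `T^{p,q}_s` for `p, q ∈ (0,∞]` (with `α = 0` when `p = ∞`,
and with `‖V^{-s}f‖_{L^∞(X⁺)}` when `p = q = ∞`). -/
def TNE (μ : Measure X) (p q : ℝ≥0∞) (s : ℝ) (f : X × ℝ → ℂ) : ℝ≥0∞ :=
  if p = ∞ then
    (if q = ∞ then linfNormPlus μ s f else tentNormPInf μ q.toReal s 0 f)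
  else (∫⁻ x, AqE μ q (Vpow μ (-s) f) x ^ p.toReal ∂μ) ^ (1/p.toReal)

/-- The norm of `L^q_s(X⁺)`, i.e. `L^q` with respect to `V^{-qs-1} dμ dt/t`. -/
def LqsNorm (μ : Measure X) (q s : ℝ) (f : X × ℝ → ℂ) : ℝ≥0∞ :=
  (∫⁻ p, (‖f p‖₊ : ℝ≥0∞) ^ q * vol μ p.1 p.2 ^ (-(q*s)) / vol μ p.1 p.2 ∂muPlus μ) ^ (1/q)

/-- `L^q` norm with respect to a measure. -/
def LqNorm {α : Type*} [MeasurableSpace α] (ν : Measure α) (q : ℝ) (f : α → ℂ) : ℝ≥0∞ :=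
  (∫⁻ x, (‖f x‖₊ : ℝ≥0∞) ^ q ∂ν) ^ (1/q)

/-- Nondegeneracy of a metric measure space. -/
def Nondeg (μ : Measure X) : Prop :=
  ∀ (x : X) (r : ℝ), 0 < r → 0 < μ (ball x r) ∧ μ (ball x r) < ∞

/-- The doubling condition. -/
def Doubling (μ : Measure X) : Prop :=
  ∃ C : ℝ≥0∞, 1 ≤ C ∧ C < ∞ ∧ ∀ (x : X) (r : ℝ), 0 < r → μ (ball x (2*r)) ≤ C * μ (ball x r)

/-- AD-regularity of dimension `n` (for all radii, as appropriate for unbounded spaces). -/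
def ADRegular (μ : Measure X) (n : ℝ) : Prop :=
  ∃ C : ℝ≥0∞, 1 ≤ C ∧ C < ∞ ∧ ∀ (x : X) (r : ℝ), 0 < r →
    ENNReal.ofReal (r ^ n) ≤ C * μ (ball x r) ∧ μ (ball x r) ≤ C * ENNReal.ofReal (r ^ n)

/-- Metric unboundedness. -/
def MetricUnbounded (X : Type*) [MetricSpace X] : Prop :=
  ∀ R : ℝ, ∃ x y : X, R < dist x y

/-- A function on `X⁺` is cylindrically supported if it vanishes a.e. outside a cylinder. -/
def CylSupported (μ : Measure X) (f : X × ℝ → ℂ) : Prop :=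
  ∃ (z : X) (r a b : ℝ), 0 < r ∧ 0 < a ∧ a < b ∧
    ∀ᵐ p ∂muPlus μ, p ∉ ball z r ×ˢ Ioo a b → f p = 0

/-- The K-functional associated with two quasinorms on functions. -/
def Kfun {α : Type*} [MeasurableSpace α] (ν : Measure α)
    (N₀ N₁ : (α → ℂ) → ℝ≥0∞) (t : ℝ≥0∞) (f : α → ℂ) : ℝ≥0∞ :=
  ⨅ (g : α → ℂ) (h : α → ℂ) (_ : f =ᵐ[ν] g + h), N₀ g + t * N₁ h

/-- The real interpolation quasinorm `‖f‖_{(A₀,A₁)_{θ,p}}`, continuous form. -/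
def interpNorm {α : Type*} [MeasurableSpace α] (ν : Measure α)
    (N₀ N₁ : (α → ℂ) → ℝ≥0∞) (θ p : ℝ) (f : α → ℂ) : ℝ≥0∞ :=
  (∫⁻ t in Ioi (0:ℝ),
      (ENNReal.ofReal (t ^ (-θ)) * Kfun ν N₀ N₁ (ENNReal.ofReal t) f) ^ p *
        ENNReal.ofReal t⁻¹) ^ (1/p)

/-- The real interpolation quasinorm, discrete form. -/
def interpNormD {α : Type*} [MeasurableSpace α] (ν : Measure α)
    (N₀ N₁ : (α → ℂ) → ℝ≥0∞) (θ p : ℝ) (f : α → ℂ) : ℝ≥0∞ :=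
  (∑' k : ℤ, (ENNReal.ofReal ((2:ℝ) ^ (-(k:ℝ) * θ)) *
      Kfun ν N₀ N₁ (ENNReal.ofReal ((2:ℝ) ^ (k:ℝ))) f) ^ p) ^ (1/p)

/-- The Whitney region `Ω_{c₀,c₁}(x,t)`. -/
def whitney (c₀ c₁ : ℝ) (x : X) (t : ℝ) : Set (X × ℝ) :=
  ball x (c₀ * t) ×ˢ Ioo (t / c₁) (c₁ * t)

/-- The `L^q`-Whitney average `𝒲^q_{c₀,c₁} f (x,t)` (with respect to `dμ(ξ) dτ`). -/
def Wavg (μ : Measure X) (c₀ c₁ q : ℝ) (f : X × ℝ → ℂ) (x : X) (t : ℝ) : ℝ≥0∞ :=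
  (((μ.prod volume) (whitney c₀ c₁ x t))⁻¹ *
      ∫⁻ p in whitney c₀ c₁ x t, (‖f p‖₊ : ℝ≥0∞) ^ q ∂μ.prod volume) ^ (1/q)

/-- The Z-space quasinorm `‖f‖_{Z^{p,q}_s(X;c₀,c₁)}`. -/
def Znorm (μ : Measure X) (p q s c₀ c₁ : ℝ) (f : X × ℝ → ℂ) : ℝ≥0∞ :=
  (∫⁻ w, Wavg μ c₀ c₁ q (Vpow μ (-s) f) w.1 w.2 ^ p ∂muPlus μ) ^ (1/p)


/-- The quasinorm of `T^{p,∞}` for `p ∈ (0,∞]`. -/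
def TPinf {X : Type*} [MetricSpace X] [MeasurableSpace X] (μ : Measure X)
    (p : ℝ≥0∞) (f : X × ℝ → ℂ) : ℝ≥0∞ :=
  if p = ∞ then essSup (fun w => (‖f w‖₊ : ℝ≥0∞)) (muPlus μ)
  else tentNormQInf μ p.toReal f


/-! ### Auxiliary lemmas for Statement 18 -/

private lemma null_inter_of_essSup_restrict_le {α : Type*} [MeasurableSpace α]
    (ν : Measure α) (S : Set α) (g : α → ℝ≥0∞) (hg : Measurable g) (M : ℝ≥0∞)
    (h : essSup g (ν.restrict S) ≤ M) : ν ({x | M < g x} ∩ S) = 0 := by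
  have h1 : ∀ᵐ x ∂ν.restrict S, g x ≤ M := (ae_le_essSup g).mono fun x hx => hx.trans h
  rw [ae_iff] at h1
  simp only [not_le] at h1
  rwa [Measure.restrict_apply (measurableSet_lt measurable_const hg)] at h1

private lemma essSup_restrict_le_of_null {α : Type*} [MeasurableSpace α]
    (ν : Measure α) (S : Set α) (g : α → ℝ≥0∞) (hg : Measurable g) (M : ℝ≥0∞)
    (h : ν ({x | M < g x} ∩ S) = 0) : essSup g (ν.restrict S) ≤ M := by
  refine essSup_le_of_ae_le M ?_
  rw [Filter.EventuallyLE, ae_iff]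
  simp only [not_le]
  rw [Measure.restrict_apply (measurableSet_lt measurable_const hg)]
  exact h

private lemma measurableSet_cone [BorelSpace X] (x : X) :
    MeasurableSet (cone (X := X) x) := by
  have h1 : Measurable fun p : X × ℝ => dist x p.1 :=
    (continuous_const.dist continuous_id).measurable.comp measurable_fst
  exact measurableSet_lt h1 measurable_snd

private lemma doubling_pow (μ : Measure X) (hd : Doubling μ) :
    ∃ C : ℝ≥0∞, 1 ≤ C ∧ C < ∞ ∧ ∀ (x : X) (s : ℝ), 0 < s → ∀ k : ℕ,
      μ (ball x (2 ^ k * s)) ≤ C ^ k * μ (ball x s) := by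
  obtain ⟨C, h1, h2, h3⟩ := hd
  refine ⟨C, h1, h2, fun x s hs k => ?_⟩
  induction k with
  | zero => simp
  | succ k ih =>
    have e : (2 : ℝ) ^ (k + 1) * s = 2 * (2 ^ k * s) := by ring
    calc μ (ball x (2 ^ (k + 1) * s)) = μ (ball x (2 * (2 ^ k * s))) := by rw [e]
      _ ≤ C * μ (ball x (2 ^ k * s)) := h3 x _ (by positivity)
      _ ≤ C * (C ^ k * μ (ball x s)) := mul_le_mul_right ih C
      _ = C ^ (k + 1) * μ (ball x s) := by rw [← mul_assoc, ← pow_succ']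

private lemma ball_lower (μ : Measure X) (hd : Doubling μ) (z : X) (R ε : ℝ)
    (hR : 0 < R) (hε : 0 < ε) :
    ∃ c : ℝ≥0∞, 0 < c ∧ c ≤ 1 ∧ ∀ x ∈ ball z R, c * μ (ball z R) ≤ μ (ball x ε) := by
  obtain ⟨C, h1, h2, h3⟩ := doubling_pow μ hd
  obtain ⟨k, hk⟩ : ∃ k : ℕ, 2 * R < 2 ^ k * ε := by
    obtain ⟨k, hk⟩ := pow_unbounded_of_one_lt ((2 * R) / ε) (one_lt_two (α := ℝ))
    exact ⟨k, by rwa [div_lt_iff₀ hε] at hk⟩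
  have hCk0 : C ^ k ≠ 0 := pow_ne_zero _ (zero_lt_one.trans_le h1).ne'
  have hCkt : C ^ k ≠ ∞ := ENNReal.pow_ne_top h2.ne
  have hCk1 : 1 ≤ C ^ k := by
    calc (1 : ℝ≥0∞) = 1 ^ k := (one_pow k).symm
      _ ≤ C ^ k := pow_le_pow_left' h1 k
  refine ⟨(C ^ k)⁻¹, ENNReal.inv_pos.mpr hCkt, ENNReal.inv_le_one.mpr hCk1, fun x hx => ?_⟩
  have hsub : ball z R ⊆ ball x (2 ^ k * ε) := by
    intro w hw
    rw [mem_ball] at *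
    have hzx : dist z x < R := by rw [dist_comm]; exact hx
    calc dist w x ≤ dist w z + dist z x := dist_triangle _ _ _
      _ < 2 * R := by linarith
      _ ≤ 2 ^ k * ε := hk.le
  calc (C ^ k)⁻¹ * μ (ball z R) ≤ (C ^ k)⁻¹ * μ (ball x (2 ^ k * ε)) :=
        mul_le_mul_right (measure_mono hsub) _
    _ ≤ (C ^ k)⁻¹ * (C ^ k * μ (ball x ε)) := mul_le_mul_right (h3 x ε hε k) _
    _ = μ (ball x ε) := by rw [← mul_assoc, ENNReal.inv_mul_cancel hCk0 hCkt, one_mul]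

private lemma exists_finite_cover [BorelSpace X] (μ : Measure X) (hμ : Nondeg μ) (hd : Doubling μ)
    (z : X) (r ε : ℝ) (hr : 0 < r) (hε : 0 < ε) :
    ∃ s : Finset X, ↑s ⊆ ball z r ∧ ball z r ⊆ ⋃ x ∈ s, ball x ε := by
  classical
  by_contra hcon
  push_neg at hcon
  set pick : Finset X → X := fun t =>
    if h : ∃ y, y ∈ ball z r ∧ y ∉ ⋃ x ∈ t, ball x ε then h.choose else z with hpick
  set F : ℕ → Finset X := fun n => Nat.rec ∅ (fun _ t => insert (pick t) t) n with hFdef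
  have hFs : ∀ n, F (n + 1) = insert (pick (F n)) (F n) := fun n => rfl
  set u : ℕ → X := fun n => pick (F n) with hu_def
  have hmain : ∀ n, (↑(F n) : Set X) ⊆ ball z r := by
    intro n
    induction n with
    | zero => simp [hFdef]
    | succ n ih =>
      rw [hFs]
      have hex : ∃ y, y ∈ ball z r ∧ y ∉ ⋃ x ∈ F n, ball x ε := by
        obtain ⟨y, hy1, hy2⟩ := Set.not_subset.mp (hcon (F n) ih)
        exact ⟨y, hy1, hy2⟩
      rw [Finset.coe_insert, Set.insert_subset_iff]
      refine ⟨?_, ih⟩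
      rw [hpick]
      simp only [dif_pos hex]
      exact hex.choose_spec.1
  have hu : ∀ n, u n ∈ ball z r ∧ u n ∉ ⋃ x ∈ F n, ball x ε := by
    intro n
    have hex : ∃ y, y ∈ ball z r ∧ y ∉ ⋃ x ∈ F n, ball x ε := by
      obtain ⟨y, hy1, hy2⟩ := Set.not_subset.mp (hcon (F n) (hmain n))
      exact ⟨y, hy1, hy2⟩
    rw [hu_def]
    simp only [hpick, dif_pos hex]
    exact hex.choose_spec
  have hmono : Monotone F := monotone_nat_of_le_succ fun n => by
    rw [hFs]; exact Finset.subset_insert _ _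
  have hmem : ∀ m n, m < n → u m ∈ F n := by
    intro m n h
    have h1 : u m ∈ F (m + 1) := by rw [hFs]; exact Finset.mem_insert_self _ _
    exact hmono h h1
  have hsep : ∀ m n, m < n → ε ≤ dist (u n) (u m) := by
    intro m n h
    by_contra hlt
    push_neg at hlt
    exact (hu n).2 (Set.mem_biUnion (hmem m n h) (mem_ball.mpr hlt))
  have hdisj : ∀ m n, m < n → Disjoint (ball (u m) (ε / 2)) (ball (u n) (ε / 2)) := by
    intro m n h
    rw [Set.disjoint_left]
    intro w hw1 hw2
    rw [mem_ball] at hw1 hw2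
    have h1 := hsep m n h
    have h2 : dist (u n) (u m) ≤ dist (u n) w + dist w (u m) := dist_triangle _ _ _
    have h3 : dist (u n) w < ε / 2 := by rw [dist_comm]; exact hw2
    linarith
  obtain ⟨c, hc0, hc1, hcb⟩ := ball_lower μ hd z (r + ε) (ε / 2) (by linarith) (by positivity)
  set V : ℝ≥0∞ := μ (ball z (r + ε)) with hV
  have hVne := hμ z (r + ε) (by linarith)
  set m : ℝ≥0∞ := c * V with hm
  have hm0 : m ≠ 0 := mul_ne_zero hc0.ne' hVne.1.ne'
  have hmlt : m ≤ V := by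
    calc c * V ≤ 1 * V := mul_le_mul_left hc1 _
      _ = V := one_mul _
  have key : ∀ N : ℕ, (N : ℝ≥0∞) ≤ V / m := by
    intro N
    have hpwd : (↑(Finset.range N) : Set ℕ).PairwiseDisjoint fun i => ball (u i) (ε / 2) := by
      intro i _ j _ hij
      rcases hij.lt_or_gt with h | h
      · exact hdisj i j h
      · exact (hdisj j i h).symm
    have hsum : ∑ i ∈ Finset.range N, μ (ball (u i) (ε / 2)) ≤ V := by
      rw [← measure_biUnion_finset hpwd fun i _ => measurableSet_ball]
      apply measure_mono
      simp only [Set.iUnion_subset_iff]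
      intro i _ w hw
      rw [mem_ball] at *
      have h1 : dist (u i) z < r := mem_ball.mp (hu i).1
      have h2 : dist w z ≤ dist w (u i) + dist (u i) z := dist_triangle _ _ _
      linarith
    have hlower : ∀ i ∈ Finset.range N, m ≤ μ (ball (u i) (ε / 2)) := by
      intro i _
      exact hcb (u i) (ball_subset_ball (by linarith) (hu i).1)
    have hNm : (N : ℝ≥0∞) * m ≤ V := by
      calc (N : ℝ≥0∞) * m = (Finset.range N).card • m := by
            rw [nsmul_eq_mul, Finset.card_range]
        _ ≤ ∑ i ∈ Finset.range N, μ (ball (u i) (ε / 2)) :=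
            Finset.card_nsmul_le_sum _ _ _ hlower
        _ ≤ V := hsum
    exact (ENNReal.le_div_iff_mul_le (Or.inl hm0) (Or.inl (hmlt.trans_lt hVne.2).ne)).mpr hNm
  have hfin : V / m ≠ ∞ := (ENNReal.div_lt_top hVne.2.ne hm0).ne
  obtain ⟨N, hN⟩ := ENNReal.exists_nat_gt hfin
  exact absurd (key N) (not_le.mpr hN)

/-- For `X` doubling, `p ∈ (0,∞]` and a subset `K` of a cylinder:
`‖1_K f‖_{T^{p,∞}} ≲_{K,p} ‖f‖_{L^∞(K)} ≲_{K,p} ‖f‖_{T^{p,∞}}`. -/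
theorem stmt18 {X : Type*} [MetricSpace X] [MeasurableSpace X] [BorelSpace X] [Nonempty X]
    (μ : Measure X) (hμ : Nondeg μ) (hd : Doubling μ) (p : ℝ≥0∞) (hp : 0 < p)
    (K : Set (X × ℝ)) (z : X) (r a b : ℝ) (hr : 0 < r) (ha : 0 < a) (hab : a < b)
    (hK : K ⊆ ball z r ×ˢ Ioo a b) :
    ∃ C₁ C₂ : ℝ≥0∞, C₁ < ∞ ∧ C₂ < ∞ ∧ ∀ f : X × ℝ → ℂ, Measurable f →
      TPinf μ p (K.indicator f) ≤
          C₁ * essSup (fun w => (‖f w‖₊ : ℝ≥0∞)) ((muPlus μ).restrict K) ∧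
      essSup (fun w => (‖f w‖₊ : ℝ≥0∞)) ((muPlus μ).restrict K) ≤ C₂ * TPinf μ p f := by
  classical
  obtain ⟨s, hs_sub, hs_cov⟩ := exists_finite_cover μ hμ hd z r (a / 2) hr (by positivity)
  obtain ⟨c, hc0, hc1, hcball⟩ := ball_lower μ hd z r (a / 2) hr (by positivity)
  set B : ℝ≥0∞ := μ (ball z (r + b)) with hB
  have hBne := hμ z (r + b) (by linarith)
  have hμr := hμ z r hr
  set m : ℝ≥0∞ := c * μ (ball z r) with hm
  have hm0 : m ≠ 0 := mul_ne_zero hc0.ne' hμr.1.ne'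
  have hmt : m ≠ ∞ := by
    have h1 : m ≤ μ (ball z r) := by
      calc c * μ (ball z r) ≤ 1 * μ (ball z r) := mul_le_mul_left hc1 _
        _ = μ (ball z r) := one_mul _
    exact (h1.trans_lt hμr.2).ne
  have hexp : (0 : ℝ) ≤ 1 / p.toReal := div_nonneg zero_le_one ENNReal.toReal_nonneg
  refine ⟨max 1 (B ^ (1 / p.toReal)), max 1 ((m⁻¹) ^ (1 / p.toReal)), ?_, ?_, ?_⟩
  · exact max_lt one_lt_top (ENNReal.rpow_lt_top_of_nonneg hexp hBne.2.ne)
  · exact max_lt one_lt_top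
      (ENNReal.rpow_lt_top_of_nonneg hexp (ENNReal.inv_ne_top.mpr hm0))
  intro f hf
  set g : X × ℝ → ℝ≥0∞ := fun w => (‖f w‖₊ : ℝ≥0∞) with hgdef
  have hg : Measurable g := hf.nnnorm.coe_nnreal_ennreal
  set M : ℝ≥0∞ := essSup g ((muPlus μ).restrict K) with hM
  constructor
  · -- first inequality
    have hnull := null_inter_of_essSup_restrict_le (muPlus μ) K g hg M le_rfl
    have hae : ∀ᵐ w ∂muPlus μ, (‖K.indicator f w‖₊ : ℝ≥0∞) ≤ M := by
      rw [ae_iff]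
      refine measure_mono_null (fun w hw => ?_) hnull
      simp only [mem_setOf_eq, not_le] at hw
      by_cases hwK : w ∈ K
      · exact ⟨by simpa [hgdef, Set.indicator_of_mem hwK] using hw, hwK⟩
      · rw [Set.indicator_of_notMem hwK] at hw
        simp at hw
    have hessfull : essSup (fun w => (‖K.indicator f w‖₊ : ℝ≥0∞)) (muPlus μ) ≤ M :=
      essSup_le_of_ae_le M hae
    by_cases hptop : p = ∞
    · simp only [TPinf, if_pos hptop]
      exact hessfull.trans (le_mul_of_one_le_left (zero_le) (le_max_left _ _))
    · have hpt : 0 < p.toReal := ENNReal.toReal_pos hp.ne' hptop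
      simp only [TPinf, if_neg hptop, tentNormQInf]
      by_cases hMtop : M = ∞
      · have hne : max 1 (B ^ (1 / p.toReal)) ≠ 0 :=
          (zero_lt_one.trans_le (le_max_left 1 (B ^ (1 / p.toReal)))).ne'
        have hinfty : max 1 (B ^ (1 / p.toReal)) * M = ∞ := by
          rw [hMtop]
          exact ENNReal.mul_top hne
        rw [hinfty]; exact le_top
      · have hAinf : ∀ x : X, Ainf μ (K.indicator f) x
            ≤ (ball z (r + b)).indicator (fun _ => M) x := by
          intro x
          by_cases hx : x ∈ ball z (r + b)
          · rw [Set.indicator_of_mem hx]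
            exact le_trans
              (essSup_mono_measure (Measure.absolutelyContinuous_of_le Measure.restrict_le_self))
              hessfull
          · rw [Set.indicator_of_notMem hx]
            refine essSup_le_of_ae_le 0 ?_
            filter_upwards [ae_restrict_mem (measurableSet_cone x)] with w hw
            have hwK : w ∉ K := by
              intro hwK
              obtain ⟨h1, h2⟩ := hK hwK
              have hxw : dist x w.1 < w.2 := hw
              have h3 : dist x z ≤ dist x w.1 + dist w.1 z := dist_triangle _ _ _
              have h4 : dist w.1 z < r := mem_ball.mp h1
              exact hx (mem_ball.mpr (by have := h2.2; simp only [mem_Ioo] at h2; linarith [h2.2]))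
            simp [Set.indicator_of_notMem hwK]
        have hint : (∫⁻ x, Ainf μ (K.indicator f) x ^ p.toReal ∂μ) ≤ M ^ p.toReal * B := by
          calc ∫⁻ x, Ainf μ (K.indicator f) x ^ p.toReal ∂μ
              ≤ ∫⁻ x, (ball z (r + b)).indicator (fun _ => M ^ p.toReal) x ∂μ := by
                apply lintegral_mono
                intro x
                by_cases hx : x ∈ ball z (r + b)
                · rw [Set.indicator_of_mem hx]
                  refine ENNReal.rpow_le_rpow ?_ hpt.le
                  have := hAinf x
                  rwa [Set.indicator_of_mem hx] at this
                · rw [Set.indicator_of_notMem hx]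
                  have h0 := hAinf x
                  rw [Set.indicator_of_notMem hx] at h0
                  show Ainf μ (K.indicator f) x ^ p.toReal ≤ 0
                  rw [le_zero_iff.mp h0, ENNReal.zero_rpow_of_pos hpt]
            _ = M ^ p.toReal * B := by
                rw [lintegral_indicator_const measurableSet_ball]
        calc (∫⁻ x, Ainf μ (K.indicator f) x ^ p.toReal ∂μ) ^ (1 / p.toReal)
            ≤ (M ^ p.toReal * B) ^ (1 / p.toReal) := ENNReal.rpow_le_rpow hint hexp
          _ = M * B ^ (1 / p.toReal) := by
              rw [ENNReal.mul_rpow_of_ne_top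
                (ENNReal.rpow_lt_top_of_nonneg hpt.le hMtop).ne hBne.2.ne,
                ← ENNReal.rpow_mul, mul_one_div_cancel hpt.ne', ENNReal.rpow_one]
          _ ≤ max 1 (B ^ (1 / p.toReal)) * M := by
              rw [mul_comm]
              exact mul_le_mul_left (le_max_right _ _) _
  · -- second inequality
    by_cases hptop : p = ∞
    · simp only [TPinf, if_pos hptop]
      refine le_trans
        (essSup_mono_measure (Measure.absolutelyContinuous_of_le Measure.restrict_le_self)) ?_
      exact le_mul_of_one_le_left (zero_le) (le_max_left _ _)
    · have hpt : 0 < p.toReal := ENNReal.toReal_pos hp.ne' hptop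
      simp only [TPinf, if_neg hptop, tentNormQInf]
      set T : ℝ≥0∞ := ∫⁻ x, Ainf μ f x ^ p.toReal ∂μ with hT
      by_cases hTtop : T = ∞
      · have hne : max 1 ((m⁻¹) ^ (1 / p.toReal)) ≠ 0 :=
          (zero_lt_one.trans_le (le_max_left 1 ((m⁻¹) ^ (1 / p.toReal)))).ne'
        have hinfty : max 1 ((m⁻¹) ^ (1 / p.toReal)) * T ^ (1 / p.toReal) = ∞ := by
          rw [hTtop, ENNReal.top_rpow_of_pos (one_div_pos.mpr hpt)]
          exact ENNReal.mul_top hne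
        rw [hinfty]; exact le_top
      · set Mt : ℝ≥0∞ := max 1 ((m⁻¹) ^ (1 / p.toReal)) * T ^ (1 / p.toReal) with hMt
        have hE : ∀ x ∈ s,
            essSup g ((muPlus μ).restrict (K ∩ (ball x (a / 2) ×ˢ (univ : Set ℝ)))) ≤ Mt := by
          intro x hxs
          set E := essSup g ((muPlus μ).restrict (K ∩ (ball x (a / 2) ×ˢ (univ : Set ℝ)))) with hEdef
          have hsubcone : ∀ x' ∈ ball x (a / 2),
              K ∩ (ball x (a / 2) ×ˢ (univ : Set ℝ)) ⊆ cone x' := by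
            rintro x' hx' w ⟨hwK, hwU⟩
            obtain ⟨h1, h2⟩ := hK hwK
            have hy : w.1 ∈ ball x (a / 2) := hwU.1
            show dist x' w.1 < w.2
            have h3 : dist x' w.1 ≤ dist x' x + dist x w.1 := dist_triangle _ _ _
            have hx'x : dist x' x < a / 2 := mem_ball.mp hx'
            have hxy : dist x w.1 < a / 2 := by rw [dist_comm]; exact mem_ball.mp hy
            have hat : a < w.2 := h2.1
            linarith
          have hEA : ∀ x' ∈ ball x (a / 2), E ≤ Ainf μ f x' := by
            intro x' hx'
            exact essSup_mono_measure (Measure.absolutelyContinuous_of_le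
              (Measure.restrict_mono (hsubcone x' hx') le_rfl))
          have hint : E ^ p.toReal * μ (ball x (a / 2)) ≤ T := by
            calc E ^ p.toReal * μ (ball x (a / 2))
                = ∫⁻ x', (ball x (a / 2)).indicator (fun _ => E ^ p.toReal) x' ∂μ :=
                  (lintegral_indicator_const measurableSet_ball _).symm
              _ ≤ T := by
                  rw [hT]
                  apply lintegral_mono
                  intro x'
                  by_cases hx' : x' ∈ ball x (a / 2)
                  · rw [Set.indicator_of_mem hx']
                    exact ENNReal.rpow_le_rpow (hEA x' hx') hpt.le
                  · rw [Set.indicator_of_notMem hx']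
                    exact zero_le
          have hml : E ^ p.toReal * m ≤ T :=
            le_trans (mul_le_mul_right (hcball x (hs_sub hxs)) _) hint
          have hEpt : E ^ p.toReal ≤ T / m :=
            (ENNReal.le_div_iff_mul_le (Or.inl hm0) (Or.inl hmt)).mpr hml
          calc E = (E ^ p.toReal) ^ (1 / p.toReal) := by
                rw [← ENNReal.rpow_mul, mul_one_div_cancel hpt.ne', ENNReal.rpow_one]
            _ ≤ (T / m) ^ (1 / p.toReal) := ENNReal.rpow_le_rpow hEpt hexp
            _ = (T * m⁻¹) ^ (1 / p.toReal) := by rw [div_eq_mul_inv]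
            _ = T ^ (1 / p.toReal) * (m⁻¹) ^ (1 / p.toReal) :=
                ENNReal.mul_rpow_of_ne_top hTtop (ENNReal.inv_ne_top.mpr hm0) _
            _ ≤ T ^ (1 / p.toReal) * max 1 ((m⁻¹) ^ (1 / p.toReal)) :=
                mul_le_mul_right (le_max_right _ _) _
            _ = Mt := by rw [hMt, mul_comm]
        refine essSup_restrict_le_of_null (muPlus μ) K g hg Mt ?_
        refine le_antisymm ?_ (zero_le)
        calc muPlus μ ({w | Mt < g w} ∩ K)
            ≤ muPlus μ (⋃ x ∈ s, ({w | Mt < g w} ∩ (K ∩ (ball x (a / 2) ×ˢ (univ : Set ℝ))))) := by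
              apply measure_mono
              rintro w ⟨hgw, hwK⟩
              have hw1 : w.1 ∈ ball z r := (hK hwK).1
              have hcov := hs_cov hw1
              simp only [Set.mem_iUnion] at hcov ⊢
              obtain ⟨x, hxs, hx⟩ := hcov
              exact ⟨x, hxs, hgw, hwK, hx, trivial⟩
          _ ≤ ∑ x ∈ s, muPlus μ ({w | Mt < g w} ∩ (K ∩ (ball x (a / 2) ×ˢ (univ : Set ℝ)))) :=
              measure_biUnion_finset_le s _
          _ = 0 := Finset.sum_eq_zero fun x hxs =>
              null_inter_of_essSup_restrict_le _ _ _ hg Mt (hE x hxs)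


end WTS
end
end

section
/- Let 1 ≤ p ≤ q ≤ ∞ and s₀ > s₁ ∈ ℝ with s₁ − s₀ = 1/p − 1. If a is a T^{1,q}_{s₀}-atom (associated with any ball B ⊆ X), then a ∈ T^{p,q}_{s₁} with ‖a‖_{T^{p,q}_{s₁}} ≤ 1. No geometric assumptions on X beyond nondegeneracy are required. -/
open MeasureTheory Metric Set Filter ENNReal
open scoped NNReal Topology

noncomputable section

namespace WTS

variable {X : Type*} [MetricSpace X] [MeasurableSpace X]

/-! ### Auxiliary lemmas for Statement 19 -/

theorem Nondeg.sigmaFinite [Nonempty X] {μ : Measure X} (hμ : Nondeg μ) : SigmaFinite μ := by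
  obtain ⟨z⟩ := ‹Nonempty X›
  refine Measure.sigmaFinite_of_countable (S := Set.range fun n : ℕ => ball z (n + 1))
    (Set.countable_range _) ?_ ?_
  · rintro s ⟨n, rfl⟩
    exact (hμ z (n + 1) (by positivity)).2
  · apply Set.eq_univ_of_forall fun x => ?_
    obtain ⟨n, hn⟩ := exists_nat_gt (dist x z)
    exact Set.mem_sUnion.2 ⟨ball z (n + 1), ⟨n, rfl⟩, by simp only [mem_ball]; linarith⟩

theorem Nondeg.countable_of_separated [BorelSpace X] [Nonempty X] {μ : Measure X} (hμ : Nondeg μ)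
    {ε : ℝ} (hε : 0 < ε) {M : Set X} (hM : M.Pairwise fun x y => ε ≤ dist x y) :
    M.Countable := by
  obtain ⟨z⟩ := ‹Nonempty X›
  have hM' : M = ⋃ n : ℕ, M ∩ ball z (n + 1) := by
    apply Set.eq_of_subset_of_subset ?_ (by simp)
    intro x hx
    obtain ⟨n, hn⟩ := exists_nat_gt (dist x z)
    exact Set.mem_iUnion.2 ⟨n, hx, by simp only [mem_ball]; linarith⟩
  rw [hM']
  refine Set.countable_iUnion fun n => ?_
  set s := M ∩ ball z (n + 1) with hs
  have key : Set.Countable {i : s | 0 < μ (ball (i : X) (ε / 2))} := by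
    apply Measure.countable_meas_pos_of_disjoint_of_meas_iUnion_ne_top μ
      (fun i => measurableSet_ball)
    · intro i j hij
      have hd : ε ≤ dist (i : X) (j : X) :=
        hM i.2.1 j.2.1 (fun h => hij (Subtype.ext h))
      exact ball_disjoint_ball (by linarith)
    · have hsub : (⋃ i : s, ball (i : X) (ε / 2)) ⊆ ball z (n + 1 + ε / 2) := by
        rintro u hu
        obtain ⟨i, hi⟩ := Set.mem_iUnion.1 hu
        have h1 : dist (i : X) z < n + 1 := i.2.2
        have h2 : dist u (i : X) < ε / 2 := hi
        have := dist_triangle u (i : X) z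
        simp only [mem_ball]
        linarith
      exact ((measure_mono hsub).trans_lt (hμ z _ (by positivity)).2).ne
  have huniv : {i : s | 0 < μ (ball (i : X) (ε / 2))} = Set.univ :=
    Set.eq_univ_of_forall fun i => (hμ _ _ (by positivity)).1
  rw [huniv, Set.countable_univ_iff] at key
  exact Set.countable_coe_iff.2 key

theorem Nondeg.secondCountable [BorelSpace X] [Nonempty X] {μ : Measure X} (hμ : Nondeg μ) :
    SecondCountableTopology X := by
  refine Metric.secondCountable_of_almost_dense_set fun ε hε => ?_
  have hchain : ∀ c ⊆ {S : Set X | S.Pairwise fun x y => ε ≤ dist x y},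
      IsChain (· ⊆ ·) c → ∃ ub ∈ {S : Set X | S.Pairwise fun x y => ε ≤ dist x y},
        ∀ s ∈ c, s ⊆ ub := by
    intro c hcS hc
    refine ⟨⋃₀ c, fun x hx y hy hxy => ?_, fun s hs => Set.subset_sUnion_of_mem hs⟩
    obtain ⟨s, hs, hxs⟩ := hx
    obtain ⟨t, ht, hyt⟩ := hy
    rcases hc.total hs ht with hst | hts
    · exact hcS ht (hst hxs) hyt hxy
    · exact hcS hs hxs (hts hyt) hxy
  obtain ⟨M, hMmax⟩ := zorn_subset {S : Set X | S.Pairwise fun x y => ε ≤ dist x y} hchain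
  have hMmem := hMmax.1
  refine ⟨M, hμ.countable_of_separated hε hMmem, fun x => ?_⟩
  by_contra h
  push_neg at h
  have hx : x ∉ M := fun hx => absurd (h x hx) (by simp [dist_self]; linarith)
  have hins : insert x M ∈ {S : Set X | S.Pairwise fun x y => ε ≤ dist x y} :=
    Set.pairwise_insert.2
      ⟨hMmem, fun b hb _ => ⟨(h b hb).le, by rw [dist_comm]; exact (h b hb).le⟩⟩
  exact hx (hMmax.2 hins (Set.subset_insert x M) (Set.mem_insert x M))

instance : SFinite tMeasure := by unfold tMeasure; infer_instance

lemma sfinite_muPlus {μ : Measure X} [SFinite μ] : SFinite (muPlus μ) := by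
  unfold muPlus; infer_instance

lemma ae_snd_pos (μ : Measure X) : ∀ᵐ w ∂muPlus μ, 0 < w.2 := by
  rw [ae_iff]
  have hset : {w : X × ℝ | ¬0 < w.2} = (Set.univ : Set X) ×ˢ Set.Iic (0:ℝ) := by
    ext w; simp [Set.mem_prod, not_lt]
  have htM : tMeasure (Set.Iic (0:ℝ)) = 0 := by
    unfold tMeasure
    rw [withDensity_apply _ measurableSet_Iic, Measure.restrict_restrict measurableSet_Iic]
    have : Set.Iic (0:ℝ) ∩ Set.Ioi (0:ℝ) = ∅ := by
      ext t; simp only [Set.mem_inter_iff, Set.mem_Iic, Set.mem_Ioi, Set.mem_empty_iff_false,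
        iff_false, not_and, not_lt]
      exact fun h => h
    rw [this, Measure.restrict_empty, lintegral_zero_measure]
  rw [hset]
  unfold muPlus
  rw [Measure.prod_prod, htM, mul_zero]

/-- If `w` lies in the tent over `B(z,r)`, the weight `V^{-s₁}` is controlled by `V^{-s₀}`. -/
lemma vpow_tent_bound {μ : Measure X} (hμ : Nondeg μ) {z : X} {r : ℝ} (hr : 0 < r)
    {s₀ s₁ : ℝ} (hc : s₁ ≤ s₀) (a : X × ℝ → ℂ) {w : X × ℝ} (hw : w ∈ tent z r) :
    (‖Vpow μ (-s₁) a w‖₊ : ℝ≥0∞) ≤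
      μ (ball z r) ^ (s₀ - s₁) * (‖Vpow μ (-s₀) a w‖₊ : ℝ≥0∞) := by
  have hB := hμ z r hr
  have hBtop : μ (ball z r) ≠ ∞ := hB.2.ne
  have hw2 : 0 < w.2 := hw.1
  have hv := hμ w.1 w.2 hw2
  have hvt : vol μ w.1 w.2 ≠ ∞ := hv.2.ne
  have hv0 : (0:ℝ) < (vol μ w.1 w.2).toReal := ENNReal.toReal_pos hv.1.ne' hvt
  have hvB : (vol μ w.1 w.2).toReal ≤ (μ (ball z r)).toReal :=
    ENNReal.toReal_mono hBtop (measure_mono hw.2)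
  set v : ℝ := (vol μ w.1 w.2).toReal with hvdef
  have hnorm : ∀ s : ℝ, ‖Vpow μ s a w‖ = v ^ s * ‖a w‖ := by
    intro s
    rw [Vpow, norm_mul, Complex.norm_real, Real.norm_eq_abs,
      abs_of_nonneg (Real.rpow_nonneg hv0.le s)]
  have hsplit : v ^ (-s₁) = v ^ (s₀ - s₁) * v ^ (-s₀) := by
    rw [← Real.rpow_add hv0]; ring_nf
  have hle : ‖Vpow μ (-s₁) a w‖ ≤ (μ (ball z r)).toReal ^ (s₀ - s₁) * ‖Vpow μ (-s₀) a w‖ := by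
    rw [hnorm, hnorm, hsplit, mul_assoc]
    refine mul_le_mul_of_nonneg_right ?_ (by positivity)
    exact Real.rpow_le_rpow hv0.le hvB (by linarith)
  calc (‖Vpow μ (-s₁) a w‖₊ : ℝ≥0∞) = ENNReal.ofReal ‖Vpow μ (-s₁) a w‖ :=
        (ofReal_norm _).symm
    _ ≤ ENNReal.ofReal ((μ (ball z r)).toReal ^ (s₀ - s₁) * ‖Vpow μ (-s₀) a w‖) :=
        ENNReal.ofReal_le_ofReal hle
    _ = ENNReal.ofReal ((μ (ball z r)).toReal ^ (s₀ - s₁)) *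
          ENNReal.ofReal ‖Vpow μ (-s₀) a w‖ :=
        ENNReal.ofReal_mul (by positivity)
    _ = μ (ball z r) ^ (s₀ - s₁) * (‖Vpow μ (-s₀) a w‖₊ : ℝ≥0∞) := by
        rw [ofReal_norm, enorm_eq_nnnorm, ENNReal.toReal_rpow,
          ENNReal.ofReal_toReal (ENNReal.rpow_ne_top_of_nonneg (by linarith) hBtop)]

lemma vpow_zero_of_zero {μ : Measure X} (s : ℝ) {a : X × ℝ → ℂ} {w : X × ℝ} (hw : a w = 0) :
    Vpow μ s a w = 0 := by simp [Vpow, hw]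

lemma isOpen_cone (x : X) : IsOpen (cone x) :=
  isOpen_lt (continuous_const.dist continuous_fst) continuous_snd

lemma measurable_vol [BorelSpace X] [SecondCountableTopology X] {μ : Measure X} [SFinite μ] :
    Measurable fun w : X × ℝ => vol μ w.1 w.2 := by
  have hs : MeasurableSet {q : (X × ℝ) × X | dist q.2 q.1.1 < q.1.2} :=
    (isOpen_lt (continuous_snd.dist (continuous_fst.fst)) continuous_fst.snd).measurableSet
  have h := measurable_measure_prodMk_left (ν := μ) hs
  have hball : ∀ w : X × ℝ, (Prod.mk w ⁻¹' {q : (X × ℝ) × X | dist q.2 q.1.1 < q.1.2}) =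
      ball w.1 w.2 := by
    intro w; ext u; simp [mem_ball, Set.mem_preimage, Set.mem_setOf_eq]
  unfold vol
  simp only [hball] at h
  exact h

lemma measurable_Vpow [BorelSpace X] [SecondCountableTopology X] {μ : Measure X} [SFinite μ]
    (s : ℝ) {a : X × ℝ → ℂ} (ha : Measurable a) : Measurable (Vpow μ s a) :=
  (Complex.measurable_ofReal.comp (measurable_vol.ennreal_toReal.pow_const s)).mul ha

lemma measurable_Aq [BorelSpace X] [SecondCountableTopology X] {μ : Measure X} [SFinite μ]
    (q' : ℝ) {f : X × ℝ → ℂ} (hf : Measurable f) : Measurable fun x => Aq μ q' f x := by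
  have hF : Measurable fun w : X × ℝ => (‖f w‖₊ : ℝ≥0∞) ^ q' / vol μ w.1 w.2 :=
    (hf.enorm.pow_const q').div measurable_vol
  have hS : MeasurableSet {xw : X × (X × ℝ) | dist xw.1 xw.2.1 < xw.2.2} :=
    (isOpen_lt (continuous_fst.dist continuous_snd.fst) continuous_snd.snd).measurableSet
  have := sfinite_muPlus (μ := μ)
  have h2 : Measurable fun x => ∫⁻ w, ({xw : X × (X × ℝ) | dist xw.1 xw.2.1 < xw.2.2}.indicator
      (fun xw => (‖f xw.2‖₊ : ℝ≥0∞) ^ q' / vol μ xw.2.1 xw.2.2)) (x, w) ∂muPlus μ :=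
    Measurable.lintegral_prod_right' ((hF.comp measurable_snd).indicator hS)
  have heq : ∀ x, Aq μ q' f x =
      (∫⁻ w, ({xw : X × (X × ℝ) | dist xw.1 xw.2.1 < xw.2.2}.indicator
        (fun xw => (‖f xw.2‖₊ : ℝ≥0∞) ^ q' / vol μ xw.2.1 xw.2.2)) (x, w) ∂muPlus μ) ^ (1/q') := by
    intro x
    rw [Aq, ← lintegral_indicator (isOpen_cone x).measurableSet]
    congr 1
  simp only [heq]
  exact h2.pow_const _
lemma holder_ball {μ : Measure X} {g : X → ℝ≥0∞} (hg : AEMeasurable g μ) {B : Set X}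
    (hB : MeasurableSet B) {p' q' : ℝ} (hp' : 0 < p') (hpq' : p' ≤ q') :
    ∫⁻ x in B, g x ^ p' ∂μ ≤ μ B ^ (1 - p'/q') * (∫⁻ x, g x ^ q' ∂μ) ^ (p'/q') := by
  rcases eq_or_lt_of_le hpq' with rfl | hlt
  · rw [div_self hp'.ne', sub_self, ENNReal.rpow_zero, one_mul, ENNReal.rpow_one]
    exact setLIntegral_le_lintegral _ _
  · have hq' : 0 < q' := hp'.trans hlt
    set R := q' / p' with hRdef
    have hR1 : 1 < R := (one_lt_div hp').2 hlt
    have hR0 : 0 < R := lt_trans zero_lt_one hR1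
    have hRR : 0 < R / (R - 1) := div_pos hR0 (by linarith)
    have hconj : R.HolderConjugate (R / (R - 1)) := Real.HolderConjugate.conjExponent hR1
    have hind : AEMeasurable (fun x => B.indicator (fun _ => (1:ℝ≥0∞)) x) μ :=
      (measurable_const.indicator hB).aemeasurable
    have key := ENNReal.lintegral_mul_le_Lp_mul_Lq μ hconj (hg.pow_const p') hind
    simp only [Pi.mul_apply] at key
    beta_reduce at key
    have e1 : ∀ x : X, (g x ^ p') ^ R = g x ^ q' := fun x => by
      rw [← ENNReal.rpow_mul]
      congr 1
      rw [hRdef]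
      field_simp
    have e2 : ∀ x : X, (B.indicator (fun _ => (1:ℝ≥0∞)) x) ^ (R/(R-1)) =
        B.indicator (fun _ => (1:ℝ≥0∞)) x := fun x => by
      by_cases hx : x ∈ B <;>
        simp [Set.indicator_apply, hx, ENNReal.zero_rpow_of_pos hRR]
    have e3 : ∀ x : X, g x ^ p' * B.indicator (fun _ => (1:ℝ≥0∞)) x =
        B.indicator (fun x => g x ^ p') x := fun x => by
      by_cases hx : x ∈ B <;> simp [Set.indicator_apply, hx]
    simp only [e1, e2, e3] at key
    rw [lintegral_indicator hB, lintegral_indicator_const hB, one_mul] at key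
    have hexp1 : (1/R : ℝ) = p'/q' := by rw [hRdef, one_div_div]
    have hexp2 : (1/(R/(R-1)) : ℝ) = 1 - p'/q' := by
      rw [one_div_div, hRdef]
      field_simp
    rw [hexp1, hexp2] at key
    exact key.trans (mul_comm _ _).le

lemma aq_eq_zero_outside [BorelSpace X] {μ : Measure X} {z : X} {r : ℝ}
    {a : X × ℝ → ℂ} (hsupp : ∀ᵐ w ∂muPlus μ, w ∉ tent z r → a w = 0)
    {x : X} (hx : x ∉ ball z r) (s : ℝ) {q' : ℝ} (hq' : 0 < q') :
    Aq μ q' (Vpow μ s a) x = 0 := by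
  rw [Aq]
  have h0 : ∫⁻ w in cone x, (‖Vpow μ s a w‖₊ : ℝ≥0∞) ^ q' / vol μ w.1 w.2 ∂muPlus μ = 0 := by
    calc ∫⁻ w in cone x, (‖Vpow μ s a w‖₊ : ℝ≥0∞) ^ q' / vol μ w.1 w.2 ∂muPlus μ
        = ∫⁻ _ in cone x, 0 ∂muPlus μ := by
          apply lintegral_congr_ae
          filter_upwards [ae_restrict_of_ae hsupp,
            ae_restrict_mem (isOpen_cone x).measurableSet] with w hw hwc
          have haw : a w = 0 := hw fun hwt => hx (hwt.2 (mem_ball.2 hwc))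
          rw [vpow_zero_of_zero s haw]
          simp [ENNReal.zero_rpow_of_pos hq']
      _ = 0 := lintegral_zero
  rw [h0, ENNReal.zero_rpow_of_pos (by positivity)]

lemma aq_le_of_supp [BorelSpace X] {μ : Measure X} (hμ : Nondeg μ) {z : X} {r : ℝ} (hr : 0 < r)
    {s₀ s₁ : ℝ} (hc : s₁ ≤ s₀) {a : X × ℝ → ℂ}
    (hsupp : ∀ᵐ w ∂muPlus μ, w ∉ tent z r → a w = 0) (x : X) {q' : ℝ} (hq' : 0 < q') :
    Aq μ q' (Vpow μ (-s₁) a) x ≤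
      μ (ball z r) ^ (s₀ - s₁) * Aq μ q' (Vpow μ (-s₀) a) x := by
  have hBtop : μ (ball z r) ≠ ∞ := (hμ z r hr).2.ne
  set C := μ (ball z r) ^ (s₀ - s₁) with hCdef
  have hCtop : C ≠ ∞ := ENNReal.rpow_ne_top_of_nonneg (by linarith) hBtop
  have hCq : C ^ q' ≠ ∞ := ENNReal.rpow_ne_top_of_nonneg hq'.le hCtop
  rw [Aq, Aq]
  have hmono : ∫⁻ w in cone x, (‖Vpow μ (-s₁) a w‖₊ : ℝ≥0∞) ^ q' / vol μ w.1 w.2 ∂muPlus μ ≤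
      ∫⁻ w in cone x,
        C ^ q' * ((‖Vpow μ (-s₀) a w‖₊ : ℝ≥0∞) ^ q' / vol μ w.1 w.2) ∂muPlus μ := by
    apply lintegral_mono_ae
    filter_upwards [ae_restrict_of_ae hsupp] with w hw
    by_cases haw : a w = 0
    · rw [vpow_zero_of_zero _ haw]
      simp [ENNReal.zero_rpow_of_pos hq']
    · have hwt : w ∈ tent z r := Classical.byContradiction fun h => haw (hw h)
      have h1 := vpow_tent_bound hμ hr hc a hwt
      have h2 : (‖Vpow μ (-s₁) a w‖₊ : ℝ≥0∞) ^ q' ≤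
          C ^ q' * (‖Vpow μ (-s₀) a w‖₊ : ℝ≥0∞) ^ q' := by
        rw [← ENNReal.mul_rpow_of_nonneg _ _ hq'.le]
        exact ENNReal.rpow_le_rpow h1 hq'.le
      calc (‖Vpow μ (-s₁) a w‖₊ : ℝ≥0∞) ^ q' / vol μ w.1 w.2
          ≤ (C ^ q' * (‖Vpow μ (-s₀) a w‖₊ : ℝ≥0∞) ^ q') / vol μ w.1 w.2 :=
            ENNReal.div_le_div_right h2 _
        _ = C ^ q' * ((‖Vpow μ (-s₀) a w‖₊ : ℝ≥0∞) ^ q' / vol μ w.1 w.2) := by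
            rw [mul_div_assoc]
  rw [lintegral_const_mul' _ _ hCq] at hmono
  calc (∫⁻ w in cone x, (‖Vpow μ (-s₁) a w‖₊ : ℝ≥0∞) ^ q' / vol μ w.1 w.2 ∂muPlus μ) ^ (1/q')
      ≤ (C ^ q' * ∫⁻ w in cone x,
          (‖Vpow μ (-s₀) a w‖₊ : ℝ≥0∞) ^ q' / vol μ w.1 w.2 ∂muPlus μ) ^ (1/q') :=
        ENNReal.rpow_le_rpow hmono (by positivity)
    _ = C * (∫⁻ w in cone x,
          (‖Vpow μ (-s₀) a w‖₊ : ℝ≥0∞) ^ q' / vol μ w.1 w.2 ∂muPlus μ) ^ (1/q') := by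
        rw [ENNReal.mul_rpow_of_nonneg _ _ (by positivity), ← ENNReal.rpow_mul,
          mul_one_div_cancel hq'.ne', ENNReal.rpow_one]

/-- Let `1 ≤ p ≤ q ≤ ∞` and `s₁ - s₀ = 1/p - 1` with `s₁ < s₀`.
If `a` is a `T^{1,q}_{s₀}`-atom (essentially supported in `T(B)` with
`‖a‖_{T^{q,q}_{s₀}} ≤ μ(B)^{1/q - 1}`), then `‖a‖_{T^{p,q}_{s₁}} ≤ 1`.
No geometric assumptions beyond nondegeneracy are required. -/
theorem stmt19 {X : Type*} [MetricSpace X] [MeasurableSpace X] [BorelSpace X] [Nonempty X]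
    (μ : Measure X) (hμ : Nondeg μ)
    (p q : ℝ≥0∞) (hp1 : 1 ≤ p) (hpq : p ≤ q)
    (s₀ s₁ : ℝ) (hs : s₁ < s₀) (hrel : s₁ - s₀ = 1/p.toReal - 1)
    (a : X × ℝ → ℂ) (ha : Measurable a) (z : X) (r : ℝ) (hr : 0 < r)
    (hsupp : ∀ᵐ w ∂muPlus μ, w ∉ tent z r → a w = 0)
    (hsize : TNE μ q q s₀ a ≤ μ (ball z r) ^ (1/q.toReal - 1)) :
    TNE μ p q s₁ a ≤ 1 := by
  classical
  have hsc : SecondCountableTopology X := hμ.secondCountable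
  have hsf : SigmaFinite μ := hμ.sigmaFinite
  have hB := hμ z r hr
  have hBne : μ (ball z r) ≠ 0 := hB.1.ne'
  have hBtop : μ (ball z r) ≠ ∞ := hB.2.ne
  have hcombine : ∀ e₁ e₂ : ℝ, μ (ball z r) ^ e₁ * μ (ball z r) ^ e₂ = μ (ball z r) ^ (e₁ + e₂) :=
    fun e₁ e₂ => (ENNReal.rpow_add e₁ e₂ hBne hBtop).symm
  by_cases hptop : p = ∞
  · -- Case A : p = q = ∞
    have hqtop : q = ∞ := top_le_iff.1 (hptop ▸ hpq)
    have hs01 : s₀ - s₁ = 1 := by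
      rw [hptop] at hrel
      simp only [ENNReal.toReal_top, _root_.div_zero, zero_sub] at hrel
      linarith
    have hexp : (1 / q.toReal - 1 : ℝ) = -1 := by rw [hqtop]; simp
    unfold TNE at hsize ⊢
    rw [if_pos hqtop, if_pos hqtop, hexp, ENNReal.rpow_neg_one] at hsize
    rw [if_pos hptop, if_pos hqtop]
    unfold linfNormPlus at hsize ⊢
    refine essSup_le_of_ae_le _ ?_
    have hae := ENNReal.ae_le_essSup (μ := muPlus μ) fun w => (‖Vpow μ (-s₀) a w‖₊ : ℝ≥0∞)
    filter_upwards [hsupp, hae] with w hw h0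
    by_cases haw : a w = 0
    · simp [vpow_zero_of_zero (-s₁) haw]
    · have hwt : w ∈ tent z r := Classical.byContradiction fun h => haw (hw h)
      have h1 := vpow_tent_bound hμ hr hs.le a hwt
      rw [hs01, ENNReal.rpow_one] at h1
      have h2 : (‖Vpow μ (-s₀) a w‖₊ : ℝ≥0∞) ≤ (μ (ball z r))⁻¹ := h0.trans hsize
      calc (‖Vpow μ (-s₁) a w‖₊ : ℝ≥0∞)
          ≤ μ (ball z r) * (‖Vpow μ (-s₀) a w‖₊ : ℝ≥0∞) := h1
        _ ≤ μ (ball z r) * (μ (ball z r))⁻¹ := mul_le_mul_right h2 _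
        _ = 1 := ENNReal.mul_inv_cancel hBne hBtop
  · by_cases hqtop : q = ∞
    · -- Case B : p < ∞, q = ∞
      have hp1' : (1:ℝ) ≤ p.toReal := by simpa using ENNReal.toReal_mono hptop hp1
      have hp0' : (0:ℝ) < p.toReal := lt_of_lt_of_le zero_lt_one hp1'
      have hc : s₀ - s₁ = 1 - 1/p.toReal := by linarith
      have hexp : (1 / q.toReal - 1 : ℝ) = -1 := by rw [hqtop]; simp
      unfold TNE at hsize ⊢
      rw [if_pos hqtop, if_pos hqtop, hexp, ENNReal.rpow_neg_one] at hsize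
      rw [if_neg hptop]
      simp only [AqE, if_pos hqtop]
      unfold linfNormPlus at hsize
      have hae2 : ∀ᵐ w ∂muPlus μ, (‖Vpow μ (-s₀) a w‖₊ : ℝ≥0∞) ≤ (μ (ball z r))⁻¹ := by
        filter_upwards [ENNReal.ae_le_essSup (μ := muPlus μ)
          fun w => (‖Vpow μ (-s₀) a w‖₊ : ℝ≥0∞)] with w h0
        exact h0.trans hsize
      have hpt : ∀ x : X, Ainf μ (Vpow μ (-s₁) a) x ^ p.toReal ≤
          (ball z r).indicator (fun _ => (μ (ball z r))⁻¹) x := by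
        intro x
        by_cases hx : x ∈ ball z r
        · rw [Set.indicator_of_mem hx]
          have hb : Ainf μ (Vpow μ (-s₁) a) x ≤ μ (ball z r) ^ (-(1/p.toReal)) := by
            unfold Ainf
            refine essSup_le_of_ae_le _ ?_
            filter_upwards [ae_restrict_of_ae hsupp, ae_restrict_of_ae hae2] with w hw h2
            by_cases haw : a w = 0
            · simp [vpow_zero_of_zero (-s₁) haw]
            · have hwt : w ∈ tent z r := Classical.byContradiction fun h => haw (hw h)
              have h1 := vpow_tent_bound hμ hr hs.le a hwt
              calc (‖Vpow μ (-s₁) a w‖₊ : ℝ≥0∞)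
                  ≤ μ (ball z r) ^ (s₀ - s₁) * (‖Vpow μ (-s₀) a w‖₊ : ℝ≥0∞) := h1
                _ ≤ μ (ball z r) ^ (s₀ - s₁) * (μ (ball z r))⁻¹ := mul_le_mul_right h2 _
                _ = μ (ball z r) ^ (-(1/p.toReal)) := by
                    rw [← ENNReal.rpow_neg_one, hcombine]
                    congr 1
                    rw [hc]; ring
          calc Ainf μ (Vpow μ (-s₁) a) x ^ p.toReal
              ≤ (μ (ball z r) ^ (-(1/p.toReal))) ^ p.toReal :=
                ENNReal.rpow_le_rpow hb hp0'.le
            _ = (μ (ball z r))⁻¹ := by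
                rw [← ENNReal.rpow_mul, ← ENNReal.rpow_neg_one]
                congr 1
                field_simp
        · rw [Set.indicator_of_notMem hx]
          have h00 : Ainf μ (Vpow μ (-s₁) a) x = 0 := by
            refine le_antisymm ?_ zero_le
            unfold Ainf
            refine essSup_le_of_ae_le _ ?_
            filter_upwards [ae_restrict_of_ae hsupp,
              ae_restrict_mem (isOpen_cone x).measurableSet] with w hw hwc
            have haw : a w = 0 := hw fun hwt => hx (hwt.2 (mem_ball.2 hwc))
            simp [vpow_zero_of_zero (-s₁) haw]
          rw [h00, ENNReal.zero_rpow_of_pos hp0']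
      calc (∫⁻ x, Ainf μ (Vpow μ (-s₁) a) x ^ p.toReal ∂μ) ^ (1/p.toReal)
          ≤ (∫⁻ x, (ball z r).indicator (fun _ => (μ (ball z r))⁻¹) x ∂μ) ^ (1/p.toReal) :=
            ENNReal.rpow_le_rpow (lintegral_mono hpt) (by positivity)
        _ = ((μ (ball z r))⁻¹ * μ (ball z r)) ^ (1/p.toReal) := by
            rw [lintegral_indicator_const measurableSet_ball]
        _ = 1 := by rw [ENNReal.inv_mul_cancel hBne hBtop, ENNReal.one_rpow]
    · -- Case C : p, q < ∞
      have hp1' : (1:ℝ) ≤ p.toReal := by simpa using ENNReal.toReal_mono hptop hp1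
      have hq1' : (1:ℝ) ≤ q.toReal := by
        simpa using ENNReal.toReal_mono hqtop (hp1.trans hpq)
      have hp0' : (0:ℝ) < p.toReal := lt_of_lt_of_le zero_lt_one hp1'
      have hq0' : (0:ℝ) < q.toReal := lt_of_lt_of_le zero_lt_one hq1'
      have hpq' : p.toReal ≤ q.toReal := ENNReal.toReal_mono hqtop hpq
      have hc : s₀ - s₁ = 1 - 1/p.toReal := by linarith
      have hc0 : (0:ℝ) ≤ s₀ - s₁ := by linarith
      unfold TNE at hsize ⊢
      rw [if_neg hqtop] at hsize
      rw [if_neg hptop]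
      simp only [AqE, if_neg hqtop] at hsize ⊢
      have hA₀m : Measurable fun x => Aq μ q.toReal (Vpow μ (-s₀) a) x :=
        measurable_Aq q.toReal (measurable_Vpow (-s₀) ha)
      have hsize' : ∫⁻ x, Aq μ q.toReal (Vpow μ (-s₀) a) x ^ q.toReal ∂μ ≤
          μ (ball z r) ^ ((1/q.toReal - 1) * q.toReal) := by
        have h := ENNReal.rpow_le_rpow hsize hq0'.le
        rwa [← ENNReal.rpow_mul, ← ENNReal.rpow_mul, one_div_mul_cancel hq0'.ne',
          ENNReal.rpow_one] at h
      have step1 : ∀ x : X, Aq μ q.toReal (Vpow μ (-s₁) a) x ^ p.toReal ≤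
          (ball z r).indicator
            (fun x' => (μ (ball z r) ^ (s₀ - s₁) * Aq μ q.toReal (Vpow μ (-s₀) a) x') ^
              p.toReal) x := by
        intro x
        by_cases hx : x ∈ ball z r
        · rw [Set.indicator_of_mem hx]
          exact ENNReal.rpow_le_rpow (aq_le_of_supp hμ hr hs.le hsupp x hq0') hp0'.le
        · rw [Set.indicator_of_notMem hx, aq_eq_zero_outside hsupp hx (-s₁) hq0',
            ENNReal.zero_rpow_of_pos hp0']
      have hCp : (μ (ball z r) ^ (s₀ - s₁)) ^ p.toReal ≠ ∞ :=
        ENNReal.rpow_ne_top_of_nonneg hp0'.le (ENNReal.rpow_ne_top_of_nonneg hc0 hBtop)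
      have main : ∫⁻ x, Aq μ q.toReal (Vpow μ (-s₁) a) x ^ p.toReal ∂μ ≤ 1 := by
        calc ∫⁻ x, Aq μ q.toReal (Vpow μ (-s₁) a) x ^ p.toReal ∂μ
            ≤ ∫⁻ x, (ball z r).indicator
                (fun x' => (μ (ball z r) ^ (s₀ - s₁) *
                  Aq μ q.toReal (Vpow μ (-s₀) a) x') ^ p.toReal) x ∂μ :=
              lintegral_mono step1
          _ = ∫⁻ x in ball z r, (μ (ball z r) ^ (s₀ - s₁) *
                Aq μ q.toReal (Vpow μ (-s₀) a) x) ^ p.toReal ∂μ :=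
              lintegral_indicator measurableSet_ball _
          _ = ∫⁻ x in ball z r, (μ (ball z r) ^ (s₀ - s₁)) ^ p.toReal *
                Aq μ q.toReal (Vpow μ (-s₀) a) x ^ p.toReal ∂μ :=
              lintegral_congr fun x => ENNReal.mul_rpow_of_nonneg _ _ hp0'.le
          _ = (μ (ball z r) ^ (s₀ - s₁)) ^ p.toReal *
                ∫⁻ x in ball z r, Aq μ q.toReal (Vpow μ (-s₀) a) x ^ p.toReal ∂μ :=
              lintegral_const_mul' _ _ hCp
          _ ≤ (μ (ball z r) ^ (s₀ - s₁)) ^ p.toReal *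
              (μ (ball z r) ^ (1 - p.toReal/q.toReal) *
                (∫⁻ x, Aq μ q.toReal (Vpow μ (-s₀) a) x ^ q.toReal ∂μ) ^
                  (p.toReal/q.toReal)) :=
              mul_le_mul_right
                (holder_ball hA₀m.aemeasurable measurableSet_ball hp0' hpq') _
          _ ≤ (μ (ball z r) ^ (s₀ - s₁)) ^ p.toReal *
              (μ (ball z r) ^ (1 - p.toReal/q.toReal) *
                (μ (ball z r) ^ ((1/q.toReal - 1) * q.toReal)) ^ (p.toReal/q.toReal)) := by
              refine mul_le_mul_right (mul_le_mul_right ?_ _) _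
              exact ENNReal.rpow_le_rpow hsize' (by positivity)
          _ = 1 := by
              rw [← ENNReal.rpow_mul, ← ENNReal.rpow_mul, hcombine, hcombine]
              have hE : (s₀ - s₁) * p.toReal + ((1 - p.toReal/q.toReal) +
                  (1/q.toReal - 1) * q.toReal * (p.toReal/q.toReal)) = 0 := by
                rw [hc]
                field_simp
                ring
              rw [hE, ENNReal.rpow_zero]
      calc (∫⁻ x, Aq μ q.toReal (Vpow μ (-s₁) a) x ^ p.toReal ∂μ) ^ (1/p.toReal)
          ≤ (1:ℝ≥0∞) ^ (1/p.toReal) := ENNReal.rpow_le_rpow main (by positivity)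
        _ = 1 := ENNReal.one_rpow _

end WTS
end
end
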